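/- If the Target's position satisfies the escape condition α²((x_A−x_T)²+y_T²) > (x_T−α²x_A)² with x_T > α²x_A, then the maximum value of J over the intersection interval [y̲, ȳ] is positive, where J(y) = α√(x_A²+y²) − √((y−y_T)²+x_T²); in particular there exists y with J(y) > 0. -/

import Mathlib

/-- Under the escape condition, any point (0,y) strictly inside the
Apollonius circle gives J(y) > 0, and such a point exists; in particular
the maximum of J is positive. -/
theorem escape_region_positive_payoff
    (xA xT yT α : ℝ) (hxA : 0 < xA) (hxT : 0 < xT)
    (hα : 0 < α) (hα1 : α < 1) (hpos : α ^ 2 * xA < xT)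
    (hesc : α ^ 2 * ((xA - xT) ^ 2 + yT ^ 2) > (xT - α ^ 2 * xA) ^ 2) :
    (∀ y : ℝ,
      Real.sqrt (xT ^ 2 + (y - yT) ^ 2) < α * Real.sqrt (xA ^ 2 + y ^ 2) →
      α * Real.sqrt (xA ^ 2 + y ^ 2) -
        Real.sqrt ((y - yT) ^ 2 + xT ^ 2) > 0) ∧
    (∃ y : ℝ,
      Real.sqrt (xT ^ 2 + (y - yT) ^ 2) < α * Real.sqrt (xA ^ 2 + y ^ 2)) := by
  constructor
  · intro y hy
    rw [add_comm ((y - yT) ^ 2) (xT ^ 2)]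
    linarith
  · refine ⟨yT / (1 - α ^ 2), ?_⟩
    have h1 : (0:ℝ) < 1 - α ^ 2 := by nlinarith
    set y := yT / (1 - α ^ 2) with hy
    have key : xT ^ 2 + (y - yT) ^ 2 < α ^ 2 * (xA ^ 2 + y ^ 2) := by
      have hyv : y * (1 - α ^ 2) = yT := by rw [hy]; exact div_mul_cancel₀ yT h1.ne'
      nlinarith [sq_nonneg (y * (1 - α ^ 2) - yT), sq_nonneg α, sq_nonneg y]
    have h2 : Real.sqrt (xT ^ 2 + (y - yT) ^ 2) < Real.sqrt (α ^ 2 * (xA ^ 2 + y ^ 2)) := by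
      apply Real.sqrt_lt_sqrt (by positivity) key
    calc Real.sqrt (xT ^ 2 + (y - yT) ^ 2) < Real.sqrt (α ^ 2 * (xA ^ 2 + y ^ 2)) := h2
      _ = α * Real.sqrt (xA ^ 2 + y ^ 2) := by
          rw [Real.sqrt_mul (by positivity), Real.sqrt_sq hα.le]
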